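/- Let Λ be a full-rank lattice in ℝⁿ and θ > 0. Then for every z ∈ ℝⁿ, the lattice Gaussian sum is maximized at a lattice point: g_{z,θ}(Λ) ≤ g_{0,θ}(Λ), i.e., Σ_{λ∈Λ} exp(−‖λ − z‖²/(2θ²)) ≤ Σ_{λ∈Λ} exp(−‖λ‖²/(2θ²)). -/

import Mathlib

noncomputable section

/-- The lattice Gaussian sum `g_{z,θ}(L) = Σ_{λ∈L} (2πθ²)^{−n/2}·exp(−‖λ − z‖²/(2θ²))`. -/
def latticeGaussSum {n : ℕ} (L : Set (EuclideanSpace ℝ (Fin n))) (θ : ℝ)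
    (z : EuclideanSpace ℝ (Fin n)) : ℝ :=
  ∑' l : L, (2 * Real.pi * θ ^ 2) ^ (-(n : ℝ) / 2) *
    Real.exp (-‖(l : EuclideanSpace ℝ (Fin n)) - z‖ ^ 2 / (2 * θ ^ 2))

/-- The flatness factor `ε_Λ(θ) = sup_{x∈ℝⁿ} |covol(Λ)·g_{x,θ}(Λ) − 1|` of a full-rank
lattice `Λ`, where `covol(Λ)` is the volume of a fundamental domain of `Λ`. -/
def flatnessFactor {n : ℕ} (Λ : Submodule ℤ (EuclideanSpace ℝ (Fin n))) (θ : ℝ) : ℝ :=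
  ⨆ x : EuclideanSpace ℝ (Fin n),
    |ZLattice.covolume Λ * latticeGaussSum (Λ : Set (EuclideanSpace ℝ (Fin n))) θ x - 1|

section Aux

open MeasureTheory ENNReal Real
variable {n : ℕ}


noncomputable def gE (n : ℕ) (a : ℝ) (x : EuclideanSpace ℝ (Fin n)) : ℝ≥0∞ :=
  ENNReal.ofReal (Real.exp (-a * ‖x‖^2))

lemma gE_meas (a : ℝ) : Measurable (gE n a) := by
  unfold gE; fun_prop

lemma gE_ne_top (a : ℝ) (x : EuclideanSpace ℝ (Fin n)) : gE n a x ≠ ⊤ :=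
  ENNReal.ofReal_ne_top

lemma gE_norm_identity (x y : EuclideanSpace ℝ (Fin n)) :
    ‖y‖^2 + ‖x - y‖^2 = 2*‖y - (2:ℝ)⁻¹ • x‖^2 + ‖x‖^2/2 := by
  have hp := parallelogram_law_with_norm ℝ (y - (2:ℝ)⁻¹ • x) ((2:ℝ)⁻¹ • x)
  have h1 : y - (2:ℝ)⁻¹ • x + (2:ℝ)⁻¹ • x = y := by abel
  have h2 : y - (2:ℝ)⁻¹ • x - (2:ℝ)⁻¹ • x = y - x := by
    rw [sub_sub, ← two_smul ℝ ((2:ℝ)⁻¹ • x), smul_smul]; norm_num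
  have h3 : ‖(2:ℝ)⁻¹ • x‖ = (2:ℝ)⁻¹ * ‖x‖ := by
    rw [norm_smul]; norm_num
  rw [h1, h2, h3] at hp
  rw [norm_sub_rev x y]
  nlinarith [hp]

lemma gE_conv {a : ℝ} (ha : 0 < a) (x : EuclideanSpace ℝ (Fin n)) :
    ∫⁻ y, gE n (2*a) y * gE n (2*a) (x - y) =
      (∫⁻ y, gE n (4*a) y) * gE n a x := by
  have key : ∀ y, gE n (2*a) y * gE n (2*a) (x - y)
      = gE n (4*a) (y - (2:ℝ)⁻¹ • x) * gE n a x := by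
    intro y
    unfold gE
    rw [← ENNReal.ofReal_mul (by positivity), ← ENNReal.ofReal_mul (by positivity),
      ← Real.exp_add, ← Real.exp_add]
    congr 1
    rw [Real.exp_eq_exp]
    nlinarith [gE_norm_identity x y]
  simp_rw [key]
  rw [lintegral_mul_const' _ _ (gE_ne_top a x)]
  congr 1
  have : ∀ y : EuclideanSpace ℝ (Fin n), y - (2:ℝ)⁻¹ • x = y + (-((2:ℝ)⁻¹ • x)) := by
    intro y; abel
  simp_rw [this]
  exact lintegral_add_right_eq_self (gE n (4*a)) _

lemma gE_integral_pos {a : ℝ} : 0 < ∫⁻ y, gE n a y := by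
  rw [lintegral_pos_iff_support (gE_meas a)]
  have : Function.support (gE n a) = Set.univ := by
    ext x; simp [gE, Function.mem_support, Real.exp_pos, ENNReal.ofReal_pos]
  rw [this, MeasureTheory.Measure.measure_univ_pos]
  exact NeZero.ne volume

lemma gE_integrable {a : ℝ} (ha : 0 < a) :
    Integrable (fun y : EuclideanSpace ℝ (Fin n) => Real.exp (-a * ‖y‖^2)) := by
  have := GaussianFourier.integrable_cexp_neg_mul_sq_norm_add
    (V := EuclideanSpace ℝ (Fin n)) (b := (a:ℂ)) (by simpa using ha) 0 0
  have h2 := this.norm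
  refine h2.congr ?_
  filter_upwards with y
  simp only [Complex.norm_exp]
  norm_num
  left
  norm_cast

lemma gE_integral_ne_top {a : ℝ} (ha : 0 < a) : (∫⁻ y, gE n a y) ≠ ⊤ :=
  (gE_integrable ha).lintegral_lt_top.ne

variable (Λ : Submodule ℤ (EuclideanSpace ℝ (Fin n))) [DiscreteTopology Λ] [IsZLattice ℝ Λ]

noncomputable def HH (Λ : Submodule ℤ (EuclideanSpace ℝ (Fin n))) (a : ℝ)
    (w : EuclideanSpace ℝ (Fin n)) : ℝ≥0∞ :=
  ∑' l : Λ, gE n (2*a) (w - l)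

lemma HH_meas (a : ℝ) : Measurable (HH Λ a) :=
  Measurable.ennreal_tsum fun l => (gE_meas _).comp (measurable_id.sub measurable_const)

lemma HH_periodic (a : ℝ) (l₀ : Λ) (w : EuclideanSpace ℝ (Fin n)) :
    HH Λ a ((l₀ : EuclideanSpace ℝ (Fin n)) + w) = HH Λ a w := by
  unfold HH
  rw [← (Equiv.addLeft l₀).tsum_eq (fun l : Λ => gE n (2*a) ((l₀ : EuclideanSpace ℝ (Fin n)) + w - l))]
  apply tsum_congr
  intro l
  congr 1
  push_cast [Equiv.coe_addLeft]
  abel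

lemma HH_eq_tsum_add (a : ℝ) (w : EuclideanSpace ℝ (Fin n)) :
    (∑' l : Λ, gE n (2*a) (w + l)) = HH Λ a w := by
  unfold HH
  rw [← (Equiv.neg Λ).tsum_eq (fun l : Λ => gE n (2*a) (w + l))]
  apply tsum_congr
  intro l
  rw [Equiv.neg_apply, show ((-l : Λ) : EuclideanSpace ℝ (Fin n)) = -(l : EuclideanSpace ℝ (Fin n)) from rfl,
    ← sub_eq_add_neg]

lemma gE_neg (a : ℝ) (x : EuclideanSpace ℝ (Fin n)) : gE n a (-x) = gE n a x := by
  unfold gE; rw [norm_neg]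

lemma stepA {a : ℝ} (ha : 0 < a) (z : EuclideanSpace ℝ (Fin n)) :
    ∫⁻ y, gE n (2*a) y * HH Λ a (y + z) =
      (∫⁻ y, gE n (4*a) y) * ∑' l : Λ, gE n a ((l : EuclideanSpace ℝ (Fin n)) - z) := by
  calc ∫⁻ y, gE n (2*a) y * HH Λ a (y + z)
      = ∫⁻ y, ∑' l : Λ, gE n (2*a) y * gE n (2*a) (((l : EuclideanSpace ℝ (Fin n)) - z) - y) := by
        apply lintegral_congr
        intro y
        unfold HH
        rw [ENNReal.tsum_mul_left]
        congr 1
        apply tsum_congr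
        intro l
        rw [show ((l : EuclideanSpace ℝ (Fin n)) - z) - y = -(y + z - l) by abel, gE_neg]
    _ = ∑' l : Λ, ∫⁻ y, gE n (2*a) y * gE n (2*a) (((l : EuclideanSpace ℝ (Fin n)) - z) - y) := by
        apply lintegral_tsum
        intro l
        apply Measurable.aemeasurable
        exact (gE_meas _).mul ((gE_meas _).comp (measurable_const.sub measurable_id))
    _ = ∑' l : Λ, (∫⁻ y, gE n (4*a) y) * gE n a ((l : EuclideanSpace ℝ (Fin n)) - z) :=
        tsum_congr fun l => gE_conv ha _
    _ = (∫⁻ y, gE n (4*a) y) * ∑' l : Λ, gE n a ((l : EuclideanSpace ℝ (Fin n)) - z) :=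
        ENNReal.tsum_mul_left

instance : MeasurableVAdd (↥Λ) (EuclideanSpace ℝ (Fin n)) := by
  exact ⟨fun x => measurable_subtype_coe.add measurable_const⟩

instance : VAddInvariantMeasure (↥Λ) (EuclideanSpace ℝ (Fin n)) volume := by
  constructor
  intro c s hs
  exact measure_preimage_add volume _ s

lemma stepB {a : ℝ} (z : EuclideanSpace ℝ (Fin n))
    {F : Set (EuclideanSpace ℝ (Fin n))} (hFD : IsAddFundamentalDomain Λ F volume) :
    ∫⁻ y, gE n (2*a) y * HH Λ a (y + z) = ∫⁻ y in F, HH Λ a y * HH Λ a (y + z) := by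
  rw [hFD.lintegral_eq_tsum'' (fun y => gE n (2*a) y * HH Λ a (y + z))]
  have hterm : ∀ (l : Λ) (x : EuclideanSpace ℝ (Fin n)),
      gE n (2*a) (l +ᵥ x) * HH Λ a ((l +ᵥ x) + z)
        = gE n (2*a) (x + (l : EuclideanSpace ℝ (Fin n))) * HH Λ a (x + z) := by
    intro l x
    have h1 : (l +ᵥ x : EuclideanSpace ℝ (Fin n)) = (l : EuclideanSpace ℝ (Fin n)) + x := rfl
    rw [h1, show (l : EuclideanSpace ℝ (Fin n)) + x + z = (l : EuclideanSpace ℝ (Fin n)) + (x + z) by abel,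
      HH_periodic, show (l : EuclideanSpace ℝ (Fin n)) + x = x + (l : EuclideanSpace ℝ (Fin n)) by abel]
  simp_rw [hterm]
  rw [← lintegral_tsum]
  · apply lintegral_congr
    intro x
    rw [ENNReal.tsum_mul_right, HH_eq_tsum_add]
  · intro l
    apply Measurable.aemeasurable
    exact ((gE_meas _).comp (measurable_id.add measurable_const)).mul
      ((HH_meas Λ a).comp (measurable_id.add measurable_const))

lemma stepD {a : ℝ} (z : EuclideanSpace ℝ (Fin n))
    {F : Set (EuclideanSpace ℝ (Fin n))} (hFD : IsAddFundamentalDomain Λ F volume) :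
    ∫⁻ y in F, (HH Λ a (y + z)) ^ (2:ℝ) = ∫⁻ y in F, (HH Λ a y) ^ (2:ℝ) := by
  have hmp : MeasurePreserving (· + z) (volume : Measure (EuclideanSpace ℝ (Fin n))) volume :=
    measurePreserving_add_right volume z
  have hemb : MeasurableEmbedding (· + z : EuclideanSpace ℝ (Fin n) → _) :=
    (MeasurableEquiv.addRight z).measurableEmbedding
  rw [hmp.setLIntegral_comp_emb hemb (fun y => (HH Λ a y) ^ (2:ℝ)) F]
  have hFDz : IsAddFundamentalDomain Λ ((· + z) '' F) volume := by
    refine hFD.image_of_equiv (Equiv.addRight z)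
      ?_ (Equiv.refl _) ?_
    · have : ⇑(Equiv.addRight z).symm = (· + (-z)) := by
        funext x
        simp [Equiv.addRight, sub_eq_add_neg]
      rw [this]
      exact (measurePreserving_add_right volume (-z)).quasiMeasurePreserving
    · intro g x
      show ((g : EuclideanSpace ℝ (Fin n)) + x) + z = (g : EuclideanSpace ℝ (Fin n)) + (x + z)
      abel
  exact hFDz.setLIntegral_eq hFD (fun y => (HH Λ a y) ^ (2:ℝ))
    (fun g x => by
      show HH Λ a ((g : EuclideanSpace ℝ (Fin n)) + x) ^ (2:ℝ) = HH Λ a x ^ (2:ℝ)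
      rw [HH_periodic])

lemma gE_meas_add (a : ℝ) (c : EuclideanSpace ℝ (Fin n)) :
    Measurable (fun x => gE n a (c + x)) :=
  (gE_meas a).comp (measurable_const.add measurable_id)

lemma stepC {a : ℝ} (z : EuclideanSpace ℝ (Fin n))
    (F : Set (EuclideanSpace ℝ (Fin n))) :
    ∫⁻ y in F, HH Λ a y * HH Λ a (y + z) ≤
      (∫⁻ y in F, (HH Λ a y) ^ (2:ℝ)) ^ (2:ℝ)⁻¹ *
      (∫⁻ y in F, (HH Λ a (y + z)) ^ (2:ℝ)) ^ (2:ℝ)⁻¹ := by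
  have hpq : (2:ℝ).HolderConjugate 2 := (Real.holderConjugate_iff_eq_conjExponent one_lt_two).mpr (by norm_num)
  have := ENNReal.lintegral_mul_le_Lp_mul_Lq (volume.restrict F) hpq
    (f := HH Λ a) (g := fun y => HH Λ a (y + z))
    (HH_meas Λ a).aemeasurable
    ((HH_meas Λ a).comp (measurable_id.add measurable_const)).aemeasurable
  simpa [one_div] using this

lemma tsum_finite {a : ℝ} (ha : 0 < a) :
    (∑' l : Λ, gE n a (l : EuclideanSpace ℝ (Fin n))) ≠ ⊤ := by
  classical
  set b := Module.Free.chooseBasis ℤ Λ with hb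
  set F := ZSpan.fundamentalDomain (b.ofZLatticeBasis ℝ) with hF
  have hFD : IsAddFundamentalDomain Λ F volume := ZLattice.isAddFundamentalDomain b volume
  obtain ⟨R, hR⟩ := isBounded_iff_forall_norm_le.mp
    (ZSpan.fundamentalDomain_isBounded (b.ofZLatticeBasis ℝ))
  have hvol0 : volume F ≠ 0 := ZSpan.measure_fundamentalDomain_ne_zero _
  have hvolt : volume F ≠ ⊤ :=
    ((ZSpan.fundamentalDomain_isBounded (b.ofZLatticeBasis ℝ)).measure_lt_top).ne
  set S := ∑' l : Λ, gE n a (l : EuclideanSpace ℝ (Fin n)) with hS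
  have hbound : volume F * S ≤
      ENNReal.ofReal (Real.exp (a * R^2)) * ∫⁻ x, gE n (a/2) x := by
    calc volume F * S = ∑' l : Λ, volume F * gE n a (l : EuclideanSpace ℝ (Fin n)) :=
          ENNReal.tsum_mul_left.symm
      _ = ∑' l : Λ, ∫⁻ _x in F, gE n a (l : EuclideanSpace ℝ (Fin n)) := by
          apply tsum_congr; intro l; rw [setLIntegral_const, mul_comm]
      _ ≤ ∑' l : Λ, ∫⁻ x in F,
            ENNReal.ofReal (Real.exp (a * R^2)) * gE n (a/2) ((l : EuclideanSpace ℝ (Fin n)) + x) := by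
          apply ENNReal.tsum_le_tsum
          intro l
          apply setLIntegral_mono (measurable_const.mul (gE_meas_add _ _))
          intro x hx
          unfold gE
          simp only [Pi.mul_apply]
          rw [← ENNReal.ofReal_mul (Real.exp_nonneg _), ← Real.exp_add]
          apply ENNReal.ofReal_le_ofReal
          apply Real.exp_le_exp.mpr
          have h1 : ‖(l : EuclideanSpace ℝ (Fin n)) + x‖ ≤ ‖(l : EuclideanSpace ℝ (Fin n))‖ + ‖x‖ :=
            norm_add_le _ _
          have h2 : ‖x‖ ≤ R := hR x hx
          have h3 : (0:ℝ) ≤ ‖x‖ := norm_nonneg _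
          have h4 : (0:ℝ) ≤ ‖(l : EuclideanSpace ℝ (Fin n))‖ := norm_nonneg _
          have h5 : ‖(l : EuclideanSpace ℝ (Fin n)) + x‖^2 ≤
              2*‖(l : EuclideanSpace ℝ (Fin n))‖^2 + 2*R^2 := by
            nlinarith [sq_nonneg (‖(l : EuclideanSpace ℝ (Fin n))‖ - ‖x‖),
              mul_self_le_mul_self (norm_nonneg _) h1, mul_self_le_mul_self h3 h2]
          nlinarith [mul_le_mul_of_nonneg_left h5 (by positivity : (0:ℝ) ≤ a/2)]
      _ = ENNReal.ofReal (Real.exp (a * R^2)) *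
            ∑' l : Λ, ∫⁻ x in F, gE n (a/2) ((l : EuclideanSpace ℝ (Fin n)) + x) := by
          rw [← ENNReal.tsum_mul_left]
          apply tsum_congr; intro l
          rw [lintegral_const_mul _ (gE_meas_add _ _)]
      _ = ENNReal.ofReal (Real.exp (a * R^2)) * ∫⁻ x, gE n (a/2) x := by
          rw [hFD.lintegral_eq_tsum'' (gE n (a/2))]
          rfl
  intro htop
  rw [htop, ENNReal.mul_top hvol0] at hbound
  have : ENNReal.ofReal (Real.exp (a * R^2)) * ∫⁻ x, gE n (a/2) x ≠ ⊤ :=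
    ENNReal.mul_ne_top ENNReal.ofReal_ne_top (gE_integral_ne_top (by linarith))
  exact this (top_le_iff.mp hbound)

lemma ennineq {a : ℝ} (ha : 0 < a) (z : EuclideanSpace ℝ (Fin n)) :
    (∑' l : Λ, gE n a ((l : EuclideanSpace ℝ (Fin n)) - z)) ≤
      ∑' l : Λ, gE n a (l : EuclideanSpace ℝ (Fin n)) := by
  classical
  set b := Module.Free.chooseBasis ℤ Λ with hb
  set F := ZSpan.fundamentalDomain (b.ofZLatticeBasis ℝ) with hF
  have hFD : IsAddFundamentalDomain Λ F volume := ZLattice.isAddFundamentalDomain b volume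
  set C := ∫⁻ y, gE n (4*a) y with hC
  have hC0 : C ≠ 0 := gE_integral_pos.ne'
  have hCt : C ≠ ⊤ := gE_integral_ne_top (by linarith)
  set I := ∫⁻ y in F, (HH Λ a y) ^ (2:ℝ) with hI
  have hsq : ∀ y, HH Λ a y * HH Λ a y = HH Λ a y ^ (2:ℝ) := by
    intro y
    rw [show (2:ℝ) = ((2:ℕ):ℝ) by norm_num, ENNReal.rpow_natCast, sq]
  have key0 : C * (∑' l : Λ, gE n a (l : EuclideanSpace ℝ (Fin n))) = I := by
    have h1 := (stepA Λ ha 0).symm.trans (stepB Λ 0 hFD)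
    simp only [sub_zero, add_zero] at h1
    exact h1.trans (lintegral_congr fun y => hsq y)
  have keyz : C * (∑' l : Λ, gE n a ((l : EuclideanSpace ℝ (Fin n)) - z)) =
      ∫⁻ y in F, HH Λ a y * HH Λ a (y + z) :=
    (stepA Λ ha z).symm.trans (stepB Λ z hFD)
  have hCS : C * (∑' l : Λ, gE n a ((l : EuclideanSpace ℝ (Fin n)) - z)) ≤ I := by
    rw [keyz]
    calc ∫⁻ y in F, HH Λ a y * HH Λ a (y + z)
        ≤ (∫⁻ y in F, (HH Λ a y) ^ (2:ℝ)) ^ (2:ℝ)⁻¹ *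
          (∫⁻ y in F, (HH Λ a (y + z)) ^ (2:ℝ)) ^ (2:ℝ)⁻¹ := stepC Λ z F
      _ = I ^ (2:ℝ)⁻¹ * I ^ (2:ℝ)⁻¹ := by rw [stepD Λ z hFD, hI]
      _ = I := by
          rw [← ENNReal.rpow_add_of_nonneg _ _ (by norm_num) (by norm_num)]
          norm_num
  rw [← key0] at hCS
  exact (ENNReal.mul_le_mul_iff_right hC0 hCt).mp hCS

lemma realineq {θ : ℝ} (hθ : 0 < θ) (z : EuclideanSpace ℝ (Fin n)) :
    (∑' l : Λ, Real.exp (-‖(l : EuclideanSpace ℝ (Fin n)) - z‖^2 / (2*θ^2))) ≤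
      ∑' l : Λ, Real.exp (-‖(l : EuclideanSpace ℝ (Fin n)) - 0‖^2 / (2*θ^2)) := by
  have ha : (0:ℝ) < (2*θ^2)⁻¹ := by positivity
  set a := (2*θ^2)⁻¹ with haa
  have hexp : ∀ x : EuclideanSpace ℝ (Fin n),
      Real.exp (-‖x‖^2 / (2*θ^2)) = (gE n a x).toReal := by
    intro x
    unfold gE
    rw [ENNReal.toReal_ofReal (Real.exp_nonneg _)]
    congr 1
    rw [haa]
    field_simp
  have hfin0 : (∑' l : Λ, gE n a (l : EuclideanSpace ℝ (Fin n))) ≠ ⊤ := tsum_finite Λ ha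
  have hineq := ennineq Λ ha z
  calc (∑' l : Λ, Real.exp (-‖(l : EuclideanSpace ℝ (Fin n)) - z‖^2 / (2*θ^2)))
      = (∑' l : Λ, gE n a ((l : EuclideanSpace ℝ (Fin n)) - z)).toReal := by
        rw [ENNReal.tsum_toReal_eq (fun _ => gE_ne_top _ _)]
        exact tsum_congr fun l => hexp _
    _ ≤ (∑' l : Λ, gE n a (l : EuclideanSpace ℝ (Fin n))).toReal :=
        ENNReal.toReal_mono hfin0 hineq
    _ = ∑' l : Λ, Real.exp (-‖(l : EuclideanSpace ℝ (Fin n)) - 0‖^2 / (2*θ^2)) := by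
        rw [ENNReal.tsum_toReal_eq (fun _ => gE_ne_top _ _)]
        refine tsum_congr fun l => ?_
        rw [sub_zero]
        exact (hexp _).symm

end Aux

/-- Let `Λ` be a full-rank lattice in `ℝⁿ` and `θ > 0`. Then for every
`z ∈ ℝⁿ` the lattice Gaussian sum is maximized at a lattice point: `g_{z,θ}(Λ) ≤ g_{0,θ}(Λ)`. -/
theorem stmt_10 {n : ℕ} (Λ : Submodule ℤ (EuclideanSpace ℝ (Fin n)))
    [DiscreteTopology Λ] [IsZLattice ℝ Λ] (θ : ℝ) (hθ : 0 < θ) :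
    ∀ z : EuclideanSpace ℝ (Fin n),
      latticeGaussSum (Λ : Set (EuclideanSpace ℝ (Fin n))) θ z ≤
        latticeGaussSum (Λ : Set (EuclideanSpace ℝ (Fin n))) θ 0 := by
  intro z
  unfold latticeGaussSum
  rw [tsum_mul_left, tsum_mul_left]
  have hc : (0:ℝ) ≤ (2 * Real.pi * θ ^ 2) ^ (-(n : ℝ) / 2) :=
    Real.rpow_nonneg (by positivity) _
  apply mul_le_mul_of_nonneg_left _ hc
  have h1 : ∀ w : EuclideanSpace ℝ (Fin n),
      (∑' l : (Λ : Set (EuclideanSpace ℝ (Fin n))),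
        Real.exp (-‖(l : EuclideanSpace ℝ (Fin n)) - w‖ ^ 2 / (2 * θ ^ 2)))
      = ∑' l : Λ, Real.exp (-‖(l : EuclideanSpace ℝ (Fin n)) - w‖ ^ 2 / (2 * θ ^ 2)) := by
    intro w
    rfl
  rw [h1, h1]
  exact realineq Λ hθ z

end
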